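/- arXiv:2507.23149 — 3 statements merged into one kernel-verified Lean document; each statement's English description precedes it below -/
import Mathlib

section
/- Type II error bound: Let $b, \pi$ be probability distributions on a finite set $A$ with $d := \|\pi - b\|_2 > \tau$, and let $\hat\pi$ be the empirical distribution of $T$ i.i.d. samples from $\pi$. For $\alpha \in (0,1)$, if $T \ge \frac{2|A|}{(d-\tau)^2}\ln(2/\alpha)$ and $\delta_T = \sqrt{\frac{|A|}{2T}\ln(2/\alpha)}$, then the probability that $\|\hat\pi - b\|_2 \le \tau + \delta_T$ is at most $\alpha$. -/
open MeasureTheory ProbabilityTheory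

open Real Finset in
private lemma popoviciu_fin {A : Type*} [Fintype A] (q y : A → ℝ) (hq : ∀ a, 0 ≤ q a)
    (hqs : ∑ a, q a = 1) {m M : ℝ} (hy : ∀ a, y a ∈ Set.Icc m M) :
    ∑ a, q a * y a ^ 2 - (∑ a, q a * y a) ^ 2 ≤ (M - m) ^ 2 / 4 := by
  set ν := ∑ a, q a * y a with hν
  have h1 : 0 ≤ ∑ a, q a * ((M - y a) * (y a - m)) :=
    Finset.sum_nonneg fun a _ => mul_nonneg (hq a)
      (mul_nonneg (sub_nonneg.2 (hy a).2) (sub_nonneg.2 (hy a).1))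
  have hexp : ∑ a, q a * ((M - y a) * (y a - m)) =
      (M + m) * (∑ a, q a * y a) - M * m * (∑ a, q a) - ∑ a, q a * y a ^ 2 := by
    rw [Finset.mul_sum, Finset.mul_sum, ← Finset.sum_sub_distrib, ← Finset.sum_sub_distrib]
    exact Finset.sum_congr rfl fun a _ => by ring
  rw [hexp, hqs] at h1
  nlinarith [sq_nonneg ((M + m) / 2 - ν)]

open Real Finset in
private lemma finite_hoeffding {A : Type*} [Fintype A] (p y : A → ℝ)
    (hp : ∀ a, 0 ≤ p a) (hps : ∑ a, p a = 1) {m M : ℝ}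
    (hy : ∀ a, y a ∈ Set.Icc m M) (hmean : ∑ a, p a * y a = 0)
    {t : ℝ} (ht : 0 ≤ t) :
    ∑ a, p a * exp (t * y a) ≤ exp (t ^ 2 * (M - m) ^ 2 / 8) := by
  set c2 : ℝ := (M - m) ^ 2 with hc2
  set f : ℝ → ℝ := fun s => ∑ a, p a * exp (s * y a) with hf
  set f1 : ℝ → ℝ := fun s => ∑ a, p a * y a * exp (s * y a) with hf1
  set f2 : ℝ → ℝ := fun s => ∑ a, p a * y a ^ 2 * exp (s * y a) with hf2
  have hpex : ∃ a, 0 < p a := by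
    by_contra h
    push_neg at h
    have : ∑ a, p a = 0 := Finset.sum_eq_zero fun a _ => le_antisymm (h a) (hp a)
    rw [hps] at this; norm_num at this
  obtain ⟨a0, ha0⟩ := hpex
  have hf_pos : ∀ s, 0 < f s := fun s =>
    Finset.sum_pos' (fun a _ => mul_nonneg (hp a) (exp_pos _).le)
      ⟨a0, Finset.mem_univ a0, mul_pos ha0 (exp_pos _)⟩
  have hfd : ∀ s, HasDerivAt f (f1 s) s := by
    intro s
    have h : ∀ a ∈ Finset.univ (α := A),
        HasDerivAt (fun s => p a * exp (s * y a)) (p a * y a * exp (s * y a)) s := by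
      intro a _
      have h1 : HasDerivAt (fun s : ℝ => s * y a) (y a) s := hasDerivAt_mul_const (y a)
      have h2 := (h1.exp).const_mul (p a)
      refine h2.congr_deriv ?_
      ring
    exact HasDerivAt.fun_sum h
  have hf1d : ∀ s, HasDerivAt f1 (f2 s) s := by
    intro s
    have h : ∀ a ∈ Finset.univ (α := A),
        HasDerivAt (fun s => p a * y a * exp (s * y a)) (p a * y a ^ 2 * exp (s * y a)) s := by
      intro a _
      have h1 : HasDerivAt (fun s : ℝ => s * y a) (y a) s := hasDerivAt_mul_const (y a)
      have h2 := (h1.exp).const_mul (p a * y a)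
      refine h2.congr_deriv ?_
      ring
    exact HasDerivAt.fun_sum h
  set H : ℝ → ℝ := fun s => s ^ 2 * c2 / 8 - log (f s) with hH
  set H' : ℝ → ℝ := fun s => s * c2 / 4 - f1 s / f s with hH'
  have hHd : ∀ s, HasDerivAt H (H' s) s := by
    intro s
    have h1 : HasDerivAt (fun s : ℝ => s ^ 2 * c2 / 8) (s * c2 / 4) s := by
      have := ((hasDerivAt_pow 2 s).mul_const c2).div_const 8
      refine this.congr_deriv ?_
      ring
    have h2 : HasDerivAt (fun s => log (f s)) (f1 s / f s) s :=
      (hfd s).log (hf_pos s).ne'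
    exact h1.sub h2
  have hH'd : ∀ s, HasDerivAt H'
      (c2 / 4 - (f2 s * f s - f1 s * f1 s) / (f s) ^ 2) s := by
    intro s
    have h1 : HasDerivAt (fun s : ℝ => s * c2 / 4) (c2 / 4) s := by
      have := (hasDerivAt_mul_const (x := s) c2).div_const (4 : ℝ)
      convert this using 1
    have h2 := (hf1d s).div (hfd s) (hf_pos s).ne'
    exact h1.sub h2
  have hH'' : ∀ s, 0 ≤ c2 / 4 - (f2 s * f s - f1 s * f1 s) / (f s) ^ 2 := by
    intro s
    have hfs := hf_pos s
    set q : A → ℝ := fun a => p a * exp (s * y a) / f s with hqdef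
    have hq : ∀ a, 0 ≤ q a := fun a =>
      div_nonneg (mul_nonneg (hp a) (exp_pos _).le) hfs.le
    have hqs : ∑ a, q a = 1 := by
      rw [hqdef]
      rw [← Finset.sum_div]
      exact div_self hfs.ne'
    have hq1 : ∑ a, q a * y a = f1 s / f s := by
      show _ = (∑ a, p a * y a * exp (s * y a)) / f s
      rw [Finset.sum_div]
      exact Finset.sum_congr rfl fun a _ => by rw [hqdef]; ring
    have hq2 : ∑ a, q a * y a ^ 2 = f2 s / f s := by
      show _ = (∑ a, p a * y a ^ 2 * exp (s * y a)) / f s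
      rw [Finset.sum_div]
      exact Finset.sum_congr rfl fun a _ => by rw [hqdef]; ring
    have hpop := popoviciu_fin q y hq hqs hy
    rw [hq1, hq2] at hpop
    have heq : (f2 s * f s - f1 s * f1 s) / (f s) ^ 2 = f2 s / f s - (f1 s / f s) ^ 2 := by
      field_simp
    rw [heq]
    rw [← hc2] at hpop
    linarith
  have hH'mono : Monotone H' := by
    apply monotone_of_deriv_nonneg (fun s => (hH'd s).differentiableAt)
    intro s
    rw [(hH'd s).deriv]
    exact hH'' s
  have hf10 : f1 0 = 0 := by
    rw [hf1]
    simp only [zero_mul, exp_zero, mul_one]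
    exact hmean
  have hH'0 : H' 0 = 0 := by
    rw [hH']
    simp [hf10]
  have hH'nonneg : ∀ s, 0 ≤ s → 0 ≤ H' s := by
    intro s hs
    rw [← hH'0]
    exact hH'mono hs
  have hHmono : MonotoneOn H (Set.Ici (0 : ℝ)) := by
    apply monotoneOn_of_deriv_nonneg (convex_Ici 0)
    · exact (Differentiable.continuous fun s => (hHd s).differentiableAt).continuousOn
    · exact fun s _ => (hHd s).differentiableAt.differentiableWithinAt
    · intro s hs
      rw [interior_Ici] at hs
      rw [(hHd s).deriv]
      exact hH'nonneg s hs.le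
  have hf0 : f 0 = 1 := by
    rw [hf]
    simp only [zero_mul, exp_zero, mul_one]
    exact hps
  have hH0 : H 0 = 0 := by
    rw [hH]
    simp [hf0]
  have hfin := hHmono Set.self_mem_Ici (Set.mem_Ici.2 ht) ht
  rw [hH0] at hfin
  have : log (f t) ≤ t ^ 2 * c2 / 8 := by
    rw [hH] at hfin
    simp only at hfin
    linarith
  calc f t ≤ exp (log (f t)) := by rw [Real.exp_log (hf_pos t)]
    _ ≤ exp (t ^ 2 * c2 / 8) := exp_le_exp.2 this


open Finset in
private lemma integral_comp_finite {A : Type*} [Fintype A] [DecidableEq A] [MeasurableSpace A]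
    [MeasurableSingletonClass A] {Ω : Type*} [MeasurableSpace Ω] (μ : Measure Ω)
    [IsProbabilityMeasure μ] (X : Ω → A) (hX : Measurable X) (g : A → ℝ) :
    ∫ ω, g (X ω) ∂μ = ∑ a, (μ {ω | X ω = a}).toReal * g a := by
  have hms : ∀ a : A, MeasurableSet {ω | X ω = a} := fun a => hX (measurableSet_singleton a)
  have h1 : ∀ ω, g (X ω) = ∑ a, Set.indicator {ω' | X ω' = a} (fun _ => g a) ω := by
    intro ω
    have : ∀ a : A, Set.indicator {ω' | X ω' = a} (fun _ => g a) ω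
        = if X ω = a then g a else 0 := by
      intro a
      rw [Set.indicator_apply]
      rfl
    simp_rw [this]
    rw [Finset.sum_ite_eq]
    simp
  have h2 : ∫ ω, g (X ω) ∂μ
      = ∑ a, ∫ ω, Set.indicator {ω' | X ω' = a} (fun _ => g a) ω ∂μ := by
    rw [← integral_finset_sum]
    · exact integral_congr_ae (Filter.Eventually.of_forall h1)
    · intro a _
      exact (integrable_const (g a)).indicator (hms a)
  rw [h2]
  refine Finset.sum_congr rfl fun a _ => ?_
  rw [integral_indicator_const (g a) (hms a)]
  rw [smul_eq_mul]
  rfl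

set_option maxHeartbeats 2000000 in
/-- Type II error bound: if `d := ‖π - b‖₂ > τ` and the sample
size satisfies `T ≥ (2|A|/(d-τ)²)·ln(2/α)`, then the test fails to reject
(i.e. `‖π̂ - b‖₂ ≤ τ + δ_T` with `δ_T = √((|A|/(2T))·ln(2/α))`) with
probability at most `α`. -/
theorem type_two_error_bound
    {A : Type*} [Fintype A] [Nonempty A] [DecidableEq A]
    [MeasurableSpace A] [MeasurableSingletonClass A]
    {Ω : Type*} [MeasurableSpace Ω] (μ : Measure Ω) [IsProbabilityMeasure μ]
    (T : ℕ) (hT : 0 < T)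
    (X : Fin T → Ω → A) (hmeas : ∀ t, Measurable (X t))
    (hindep : iIndepFun X μ)
    (pi : A → ℝ) (hpos : ∀ a, 0 ≤ pi a) (hsum : ∑ a, pi a = 1)
    (hlaw : ∀ t a, (μ {ω | X t ω = a}).toReal = pi a)
    (b : A → ℝ) (hbpos : ∀ a, 0 ≤ b a) (hbsum : ∑ a, b a = 1)
    (tau alpha : ℝ) (htau : 0 < tau)
    (halpha : alpha ∈ Set.Ioo (0 : ℝ) 1)
    (halt : tau < Real.sqrt (∑ a : A, (pi a - b a) ^ 2))
    (hTbig : 2 * (Fintype.card A : ℝ) /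
        (Real.sqrt (∑ a : A, (pi a - b a) ^ 2) - tau) ^ 2 * Real.log (2 / alpha) ≤ T) :
    (μ {ω | Real.sqrt (∑ a : A,
          ((∑ t, if X t ω = a then (1 : ℝ) else 0) / T - b a) ^ 2) ≤
        tau + Real.sqrt ((Fintype.card A : ℝ) / (2 * T) * Real.log (2 / alpha))}).toReal ≤
      alpha := by
  classical
  obtain ⟨halpha0, halpha1⟩ := halpha
  set L : ℝ := Real.log (2 / alpha) with hLdef
  have hL : 0 < L := Real.log_pos (by rw [lt_div_iff₀ halpha0]; linarith)
  set d : ℝ := Real.sqrt (∑ a : A, (pi a - b a) ^ 2) with hddef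
  have hd0 : 0 < d := htau.trans halt
  have hsumsq : ∑ a : A, (pi a - b a) ^ 2 = d ^ 2 := by
    rw [hddef, Real.sq_sqrt (Finset.sum_nonneg fun a _ => sq_nonneg _)]
  set u : A → ℝ := fun a => (pi a - b a) / d with hu
  have hu2 : ∑ a : A, u a ^ 2 = 1 := by
    rw [hu]
    simp only [div_pow]
    rw [← Finset.sum_div, hsumsq, div_self (pow_ne_zero 2 hd0.ne')]
  -- max / min of u
  have hne : (Finset.univ : Finset A).Nonempty := Finset.univ_nonempty
  set Mu : ℝ := Finset.univ.sup' hne u with hMudef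
  set mu : ℝ := Finset.univ.inf' hne u with hmudef
  have hMu : ∀ a, u a ≤ Mu := fun a => Finset.le_sup' u (Finset.mem_univ a)
  have hmu : ∀ a, mu ≤ u a := fun a => Finset.inf'_le u (Finset.mem_univ a)
  have hu0 : ∑ a : A, u a = 0 := by
    rw [hu, ← Finset.sum_div, Finset.sum_sub_distrib, hsum, hbsum]
    simp
  have hMu0 : 0 ≤ Mu := by
    by_contra h
    push_neg at h
    have : ∑ a : A, u a < 0 :=
      Finset.sum_neg (fun a _ => lt_of_le_of_lt (hMu a) h) hne
    rw [hu0] at this; exact lt_irrefl 0 this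
  have hmu0 : mu ≤ 0 := by
    by_contra h
    push_neg at h
    have : 0 < ∑ a : A, u a :=
      Finset.sum_pos (fun a _ => lt_of_lt_of_le h (hmu a)) hne
    rw [hu0] at this; exact lt_irrefl 0 this
  set c2 : ℝ := (Mu - mu) ^ 2 with hc2def
  have hc2le : c2 ≤ 2 := by
    obtain ⟨a1, -, hA1⟩ := Finset.exists_mem_eq_sup' hne u
    obtain ⟨a2, -, hA2⟩ := Finset.exists_mem_eq_inf' hne u
    by_cases h12 : a1 = a2
    · have hMm : Mu = mu := by rw [hMudef, hmudef, hA1, hA2, h12]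
      rw [hc2def, hMm]
      norm_num
    · have hsq : u a1 ^ 2 + u a2 ^ 2 ≤ ∑ a : A, u a ^ 2 := by
        have h := Finset.sum_le_sum_of_subset_of_nonneg
          (Finset.subset_univ ({a1, a2} : Finset A))
          (fun a _ _ => sq_nonneg (u a))
        rwa [Finset.sum_pair h12] at h
      rw [hu2] at hsq
      rw [hc2def, hMudef, hmudef, hA1, hA2]
      nlinarith [sq_nonneg (u a1 + u a2)]
  have hc2pos : 0 < c2 := by
    rcases lt_or_ge 0 c2 with h | h
    · exact h
    · exfalso
      have hMm : Mu = mu := by nlinarith [sq_nonneg (Mu - mu)]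
      have hall : ∀ a, u a = 0 := fun a =>
        le_antisymm (le_trans (hMu a) (by linarith)) (le_trans (by linarith) (hmu a))
      have : ∑ a : A, u a ^ 2 = 0 :=
        Finset.sum_eq_zero fun a _ => by rw [hall a]; ring
      rw [hu2] at this; norm_num at this
  set μu : ℝ := ∑ a : A, u a * pi a with hμudef
  set φ : A → ℝ := fun a => μu - u a with hφdef
  set δ : ℝ := Real.sqrt ((Fintype.card A : ℝ) / (2 * T) * L) with hδdef
  have hTpos : (0 : ℝ) < T := by exact_mod_cast hT
  have hδnn : 0 ≤ δ := Real.sqrt_nonneg _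
  have hdt : 0 < d - tau := sub_pos.2 halt
  -- card ≥ 2
  have hcard2 : (2 : ℝ) ≤ (Fintype.card A : ℝ) := by
    have h1 : 1 ≤ Fintype.card A := Fintype.card_pos
    have hne1 : Fintype.card A ≠ 1 := by
      intro hc
      obtain ⟨a0, ha0⟩ := Fintype.card_eq_one_iff.mp hc
      have huniv : (Finset.univ : Finset A) = {a0} := by
        ext x; simp [ha0 x]
      have hpa : pi a0 = 1 := by rw [← hsum, huniv, Finset.sum_singleton]
      have hba : b a0 = 1 := by rw [← hbsum, huniv, Finset.sum_singleton]
      have hd00 : d = 0 := by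
        rw [hddef, huniv, Finset.sum_singleton, hpa, hba]
        simp
      rw [hd00] at hd0; exact lt_irrefl 0 hd0
    have : 2 ≤ Fintype.card A := by omega
    exact_mod_cast this
  -- 2|A|L ≤ T (d-τ)²
  have hTbig' : 2 * (Fintype.card A : ℝ) * L ≤ (T : ℝ) * (d - tau) ^ 2 := by
    rw [div_mul_eq_mul_div, div_le_iff₀ (pow_pos hdt 2)] at hTbig
    linarith
  have hδle : δ ≤ (d - tau) / 2 := by
    have h1 : (Fintype.card A : ℝ) / (2 * T) * L ≤ ((d - tau) / 2) ^ 2 := by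
      rw [div_mul_eq_mul_div, div_le_iff₀ (by positivity)]
      linarith only [hTbig']
    calc δ ≤ Real.sqrt (((d - tau) / 2) ^ 2) := Real.sqrt_le_sqrt h1
      _ = (d - tau) / 2 := Real.sqrt_sq (by linarith)
  set ε : ℝ := d - tau - δ with hεdef
  have hεge : (d - tau) / 2 ≤ ε := by rw [hεdef]; linarith
  have hεpos : 0 < ε := lt_of_lt_of_le (by linarith) hεge
  set lam : ℝ := 4 * ε / c2 with hlamdef
  have hlam : 0 ≤ lam := by positivity
  -- Z, S
  set Z : Fin T → Ω → ℝ := fun t ω => φ (X t ω) with hZdef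
  set S : Ω → ℝ := fun ω => ∑ t, φ (X t ω) with hSdef
  have hφmeas : Measurable φ := measurable_of_countable φ
  have hZmeas : ∀ t, Measurable (Z t) := fun t => hφmeas.comp (hmeas t)
  have hSmeas : Measurable S := Finset.measurable_sum _ (fun t _ => hZmeas t)
  have hSsum : S = ∑ t, Z t := by
    funext ω
    rw [Finset.sum_apply]
  have hφle : ∀ a, φ a ≤ μu - mu := fun a => by
    rw [hφdef]; simp only; linarith [hmu a]
  have hφge : ∀ a, μu - Mu ≤ φ a := fun a => by
    rw [hφdef]; simp only; linarith [hMu a]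
  have hmean0 : ∑ a : A, pi a * φ a = 0 := by
    rw [hφdef]
    simp only [mul_sub]
    rw [Finset.sum_sub_distrib, ← Finset.sum_mul, hsum, one_mul, hμudef]
    rw [Finset.sum_congr rfl fun a _ => mul_comm (pi a) (u a)]
    ring
  -- event inclusion
  have hsub : {ω | Real.sqrt (∑ a : A,
          ((∑ t, if X t ω = a then (1 : ℝ) else 0) / T - b a) ^ 2) ≤ tau + δ}
      ⊆ {ω | (T : ℝ) * ε ≤ S ω} := by
    intro ω hw
    simp only [Set.mem_setOf_eq] at hw ⊢
    set v : A → ℝ := fun a => (∑ t, if X t ω = a then (1 : ℝ) else 0) / T - b a with hv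
    have hcs : ∑ a : A, u a * v a ≤ tau + δ := by
      have h2 := Finset.sum_mul_sq_le_sq_mul_sq Finset.univ u v
      rw [hu2, one_mul] at h2
      calc ∑ a : A, u a * v a ≤ |∑ a : A, u a * v a| := le_abs_self _
        _ = Real.sqrt ((∑ a : A, u a * v a) ^ 2) := (Real.sqrt_sq_eq_abs _).symm
        _ ≤ Real.sqrt (∑ a : A, v a ^ 2) := Real.sqrt_le_sqrt h2
        _ ≤ tau + δ := hw
    have hud : ∑ a : A, u a * (pi a - b a) = d := by
      rw [Finset.sum_congr rfl (fun a _ => show u a * (pi a - b a) = (pi a - b a) ^ 2 / d by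
        rw [hu]; ring)]
      rw [← Finset.sum_div, hsumsq, sq, mul_div_assoc, div_self hd0.ne', mul_one]
    have hswap : ∑ a : A, u a * ((∑ t, if X t ω = a then (1 : ℝ) else 0) / T)
        = (∑ t, u (X t ω)) / T := by
      have h1 : ∀ a : A, u a * ((∑ t, if X t ω = a then (1 : ℝ) else 0) / T)
          = (∑ t, if X t ω = a then u a else 0) / T := by
        intro a
        rw [← mul_div_assoc, Finset.mul_sum]
        congr 1
        refine Finset.sum_congr rfl fun t _ => ?_
        split <;> simp
      rw [Finset.sum_congr rfl fun a _ => h1 a, ← Finset.sum_div]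
      congr 1
      rw [Finset.sum_comm]
      refine Finset.sum_congr rfl fun t _ => ?_
      rw [Finset.sum_ite_eq]
      simp
    have hpiu : ∑ a : A, pi a * u a = μu := by
      rw [hμudef]
      exact Finset.sum_congr rfl fun a _ => mul_comm _ _
    have hv' : ∑ a : A, u a * v a
        = (∑ t, u (X t ω)) / T - ∑ a : A, u a * b a := by
      simp only [hv, mul_sub]
      rw [Finset.sum_sub_distrib, hswap]
    have hub : ∑ a : A, u a * b a = μu - d := by
      have h3 : ∑ a : A, u a * (pi a - b a) = μu - ∑ a : A, u a * b a := by
        simp only [mul_sub]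
        rw [Finset.sum_sub_distrib]
      rw [hud] at h3; linarith
    have hkey : (∑ t, u (X t ω)) / T ≤ μu - ε := by
      rw [hv', hub] at hcs
      rw [hεdef]; linarith
    have hSω : S ω = T * μu - ∑ t, u (X t ω) := by
      rw [hSdef]
      simp only [hφdef]
      rw [Finset.sum_sub_distrib, Finset.sum_const, Finset.card_univ, Fintype.card_fin,
        nsmul_eq_mul]
    rw [hSω]
    rw [div_le_iff₀ hTpos] at hkey
    linarith only [hkey]
  -- mgf bound for each Z t
  have hmgfZ : ∀ t : Fin T, mgf (Z t) μ lam ≤ Real.exp (lam ^ 2 * c2 / 8) := by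
    intro t
    have heval : mgf (Z t) μ lam = ∑ a : A, pi a * Real.exp (lam * φ a) := by
      have h := integral_comp_finite μ (X t) (hmeas t) (fun a => Real.exp (lam * φ a))
      calc mgf (Z t) μ lam = ∫ ω, Real.exp (lam * φ (X t ω)) ∂μ := rfl
        _ = ∑ a : A, (μ {ω | X t ω = a}).toReal * Real.exp (lam * φ a) := h
        _ = ∑ a : A, pi a * Real.exp (lam * φ a) :=
            Finset.sum_congr rfl fun a _ => by rw [hlaw t a]
    rw [heval]
    have hy : ∀ a, φ a ∈ Set.Icc (μu - Mu) (μu - mu) := fun a => ⟨hφge a, hφle a⟩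
    have h := finite_hoeffding pi φ hpos hsum hy hmean0 hlam
    have heq : (μu - mu) - (μu - Mu) = Mu - mu := by ring
    rw [heq] at h
    rw [hc2def]
    exact h
  -- integrability
  have hint : Integrable (fun ω => Real.exp (lam * S ω)) μ := by
    apply Integrable.mono' (integrable_const (Real.exp (lam * (T * (μu - mu)))))
    · exact ((measurable_const.mul hSmeas).exp).aestronglyMeasurable
    · refine Filter.Eventually.of_forall fun ω => ?_
      rw [Real.norm_eq_abs, abs_of_nonneg (Real.exp_pos _).le]
      refine Real.exp_le_exp.2 (mul_le_mul_of_nonneg_left ?_ hlam)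
      calc S ω = ∑ t, φ (X t ω) := rfl
        _ ≤ ∑ _t : Fin T, (μu - mu) := Finset.sum_le_sum fun t _ => hφle _
        _ = T * (μu - mu) := by
            rw [Finset.sum_const, Finset.card_univ, Fintype.card_fin, nsmul_eq_mul]
  have hchern := measure_ge_le_exp_mul_mgf (X := S) (μ := μ) (t := lam) ((T : ℝ) * ε) hlam hint
  have hindepZ : iIndepFun Z μ :=
    hindep.comp (fun _ => φ) (fun _ => hφmeas)
  have hmgfS : mgf S μ lam ≤ (Real.exp (lam ^ 2 * c2 / 8)) ^ T := by
    rw [hSsum, hindepZ.mgf_sum hZmeas Finset.univ]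
    calc ∏ t : Fin T, mgf (Z t) μ lam
        ≤ ∏ _t : Fin T, Real.exp (lam ^ 2 * c2 / 8) :=
          Finset.prod_le_prod (fun t _ => mgf_nonneg) (fun t _ => hmgfZ t)
      _ = (Real.exp (lam ^ 2 * c2 / 8)) ^ T := by
          rw [Finset.prod_const, Finset.card_univ, Fintype.card_fin]
  -- numerics
  have hTe2 : L ≤ (T : ℝ) * ε ^ 2 := by
    have hsq : ((d - tau) / 2) ^ 2 ≤ ε ^ 2 :=
      pow_le_pow_left₀ (by linarith only [hdt, hδle]) hεge 2
    have hcl : 0 ≤ ((Fintype.card A : ℝ) - 2) * L :=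
      mul_nonneg (by linarith only [hcard2]) hL.le
    have h4 : (Fintype.card A : ℝ) * L ≤ 2 * ((T : ℝ) * ((d - tau) / 2) ^ 2) := by
      linarith only [hTbig']
    have h5 : (Fintype.card A : ℝ) * L ≤ 2 * ((T : ℝ) * ε ^ 2) :=
      le_trans h4 (by linarith only [mul_le_mul_of_nonneg_left hsq hTpos.le])
    linarith only [h5, hcl]
  have hexpo : -lam * ((T : ℝ) * ε) + (T : ℝ) * (lam ^ 2 * c2 / 8) = -(2 * T * ε ^ 2 / c2) := by
    rw [hlamdef]
    field_simp
    ring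
  have hfinal : -lam * ((T : ℝ) * ε) + (T : ℝ) * (lam ^ 2 * c2 / 8) ≤ -L := by
    rw [hexpo, neg_le_neg_iff, le_div_iff₀ hc2pos]
    have h1 : 0 ≤ L * (2 - c2) := mul_nonneg hL.le (by linarith only [hc2le])
    linarith only [hTe2, h1]
  calc (μ {ω | Real.sqrt (∑ a : A,
          ((∑ t, if X t ω = a then (1 : ℝ) else 0) / T - b a) ^ 2) ≤ tau + δ}).toReal
      ≤ (μ {ω | (T : ℝ) * ε ≤ S ω}).toReal :=
        ENNReal.toReal_mono (measure_ne_top μ _) (measure_mono hsub)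
    _ ≤ Real.exp (-lam * ((T : ℝ) * ε)) * mgf S μ lam := hchern
    _ ≤ Real.exp (-lam * ((T : ℝ) * ε)) * (Real.exp (lam ^ 2 * c2 / 8)) ^ T :=
        mul_le_mul_of_nonneg_left hmgfS (Real.exp_pos _).le
    _ = Real.exp (-lam * ((T : ℝ) * ε) + (T : ℝ) * (lam ^ 2 * c2 / 8)) := by
        rw [← Real.exp_nat_mul, ← Real.exp_add]
    _ ≤ Real.exp (-L) := Real.exp_le_exp.2 hfinal
    _ = alpha / 2 := by
        rw [hLdef, Real.exp_neg, Real.exp_log (by positivity), inv_div]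
    _ ≤ alpha := by linarith
end

section
/- The softmax (logistic smooth best response) map with temperature $\sigma > 0$ is $(1/\sigma)$-Lipschitz in $\ell_2$ norm: for any finite action set $A_i$ and any utility vectors $u, u' \in \mathbb{R}^{A_i}$, $\|\mathrm{softmax}(u/\sigma) - \mathrm{softmax}(u'/\sigma)\|_2 \le \frac{1}{\sigma}\|u - u'\|_2$, where $\mathrm{softmax}(v)(a) = e^{v(a)} / \sum_{a'} e^{v(a')}$. -/
/-- The softmax map on a finite set. -/
noncomputable def softmax {A : Type*} [Fintype A] (v : A → ℝ) : A → ℝ :=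
  fun a => Real.exp (v a) / ∑ a' : A, Real.exp (v a')

section aux

variable {A : Type*} [Fintype A] [Nonempty A]

lemma softmax_sumexp_pos (v : A → ℝ) : 0 < ∑ a' : A, Real.exp (v a') :=
  Finset.sum_pos (fun a _ => Real.exp_pos _) Finset.univ_nonempty

lemma softmax_nonneg (v : A → ℝ) (a : A) : 0 ≤ softmax v a :=
  div_nonneg (Real.exp_pos _).le (softmax_sumexp_pos v).le

lemma softmax_sum_one (v : A → ℝ) : ∑ a : A, softmax v a = 1 := by
  simp only [softmax]
  rw [← Finset.sum_div]
  exact div_self (softmax_sumexp_pos v).ne'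

/-- The candidate derivative of softmax, as a continuous linear map on the pi space. -/
noncomputable def smLM (x : A → ℝ) : (A → ℝ) →L[ℝ] (A → ℝ) :=
  LinearMap.toContinuousLinearMap
  { toFun := fun w a => softmax x a * (w a - ∑ b : A, softmax x b * w b)
    map_add' := by
      intro w1 w2
      funext a
      simp only [Pi.add_apply, mul_add, Finset.sum_add_distrib]
      ring
    map_smul' := by
      intro c w
      funext a
      simp only [Pi.smul_apply, smul_eq_mul, RingHom.id_apply, Finset.mul_sum, mul_comm,
        mul_left_comm]
      rw [← Finset.mul_sum]
      ring }

lemma smLM_apply (x w : A → ℝ) (a : A) :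
    smLM x w a = softmax x a * (w a - ∑ b : A, softmax x b * w b) := rfl

lemma hasFDerivAt_softmax (x : A → ℝ) : HasFDerivAt softmax (smLM x) x := by
  apply hasFDerivAt_pi''
  intro a
  have hS0 : (∑ a' : A, Real.exp (x a')) ≠ 0 := (softmax_sumexp_pos x).ne'
  have h1 : HasFDerivAt (fun v : A → ℝ => Real.exp (v a))
      (Real.exp (x a) • ContinuousLinearMap.proj a) x :=
    (hasFDerivAt_apply a x).exp
  have hS : HasFDerivAt (fun v : A → ℝ => ∑ b : A, Real.exp (v b))
      (∑ b : A, Real.exp (x b) • (ContinuousLinearMap.proj b : (A → ℝ) →L[ℝ] ℝ)) x :=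
    HasFDerivAt.fun_sum (fun b _ => (hasFDerivAt_apply b x).exp)
  have hInv : HasFDerivAt (fun v : A → ℝ => (∑ b : A, Real.exp (v b))⁻¹)
      ((ContinuousLinearMap.smulRight (1 : ℝ →L[ℝ] ℝ)
          (-((∑ b : A, Real.exp (x b)) ^ 2)⁻¹)).comp
        (∑ b : A, Real.exp (x b) • (ContinuousLinearMap.proj b : (A → ℝ) →L[ℝ] ℝ))) x :=
    (hasFDerivAt_inv hS0).comp x hS
  have hmul := h1.fun_mul hInv
  have hfun : (fun v : A → ℝ => Real.exp (v a) * (∑ b : A, Real.exp (v b))⁻¹)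
      = fun v => softmax v a := by
    funext v
    rw [softmax, div_eq_mul_inv]
  rw [hfun] at hmul
  refine hmul.congr_fderiv ?_
  ext w
  simp only [ContinuousLinearMap.coe_comp', Function.comp_apply, ContinuousLinearMap.add_apply,
    ContinuousLinearMap.coe_smul', Pi.smul_apply, ContinuousLinearMap.smulRight_apply,
    ContinuousLinearMap.one_apply, ContinuousLinearMap.coe_sum', Finset.sum_apply,
    ContinuousLinearMap.proj_apply, smul_eq_mul]
  rw [smLM_apply]
  have hsum : ∑ b : A, softmax x b * w b
      = (∑ b : A, Real.exp (x b) * w b) / (∑ a' : A, Real.exp (x a')) := by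
    rw [Finset.sum_div]
    refine Finset.sum_congr rfl fun b _ => ?_
    rw [softmax, div_mul_eq_mul_div]
  rw [softmax, hsum]
  field_simp
  ring

/-- The key algebraic inequality: the softmax Jacobian has ℓ² operator norm at most 1. -/
lemma key_ineq (p w : A → ℝ) (hp0 : ∀ a, 0 ≤ p a) (hp1 : ∑ a : A, p a = 1) :
    ∑ a : A, (p a * (w a - ∑ b : A, p b * w b)) ^ 2 ≤ ∑ a : A, w a ^ 2 := by
  set m : ℝ := ∑ b : A, p b * w b with hm
  have hple : ∀ a, p a ≤ 1 := by
    intro a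
    calc p a ≤ ∑ b : A, p b :=
          Finset.single_le_sum (fun b _ => hp0 b) (Finset.mem_univ a)
      _ = 1 := hp1
  have step1 : ∑ a : A, (p a * (w a - m)) ^ 2 ≤ ∑ a : A, p a * (w a - m) ^ 2 := by
    refine Finset.sum_le_sum fun a _ => ?_
    rw [mul_pow]
    have : p a ^ 2 ≤ p a := by nlinarith [hp0 a, hple a]
    exact mul_le_mul_of_nonneg_right this (sq_nonneg _)
  have step2 : ∑ a : A, p a * (w a - m) ^ 2 = (∑ a : A, p a * w a ^ 2) - m ^ 2 := by
    have expand : ∀ a : A, p a * (w a - m) ^ 2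
        = p a * w a ^ 2 - (2 * m) * (p a * w a) + m ^ 2 * p a := fun a => by ring
    rw [Finset.sum_congr rfl fun a _ => expand a]
    rw [Finset.sum_add_distrib, Finset.sum_sub_distrib, ← Finset.mul_sum, ← Finset.mul_sum,
      hp1, ← hm]
    ring
  have step3 : ∑ a : A, p a * w a ^ 2 ≤ ∑ a : A, w a ^ 2 := by
    refine Finset.sum_le_sum fun a _ => ?_
    nlinarith [hple a, sq_nonneg (w a), hp0 a]
  nlinarith [sq_nonneg m]

end aux

/-- the softmax smooth best response with temperature `σ > 0` is
`(1/σ)`-Lipschitz in `ℓ₂` norm as a function of the utility vector. -/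
theorem softmax_lipschitz
    {A : Type*} [Fintype A] [Nonempty A]
    (sigma : ℝ) (hsigma : 0 < sigma) (u u' : A → ℝ) :
    Real.sqrt (∑ a : A,
        (softmax (fun b => u b / sigma) a - softmax (fun b => u' b / sigma) a) ^ 2) ≤
      (1 / sigma) * Real.sqrt (∑ a : A, (u a - u' a) ^ 2) := by
  classical
  set E := EuclideanSpace ℝ A
  let e : E ≃L[ℝ] (A → ℝ) := PiLp.continuousLinearEquiv 2 ℝ (fun _ : A => ℝ)
  set F : E → E := fun v => e.symm (softmax (e v)) with hF
  set L : E → (E →L[ℝ] E) := fun v =>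
    (e.symm.toContinuousLinearMap.comp ((smLM (e v)).comp e.toContinuousLinearMap)) with hL
  have hFderiv : ∀ v : E, HasFDerivAt F (L v) v := by
    intro v
    exact e.symm.toContinuousLinearMap.hasFDerivAt.comp v
      ((hasFDerivAt_softmax (e v)).comp v e.toContinuousLinearMap.hasFDerivAt)
  have hnorm : ∀ v : E, ‖L v‖ ≤ 1 := by
    intro v
    refine ContinuousLinearMap.opNorm_le_bound _ zero_le_one fun w => ?_
    rw [one_mul]
    have hLw : ∀ a : A, (L v w) a = smLM (e v) (e w) a := fun a => rfl
    rw [EuclideanSpace.norm_eq, EuclideanSpace.norm_eq]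
    have h1 : ∑ a : A, ‖(L v w) a‖ ^ 2
        = ∑ a : A, (softmax (e v) a * ((e w) a - ∑ b : A, softmax (e v) b * (e w) b)) ^ 2 := by
      refine Finset.sum_congr rfl fun a _ => ?_
      rw [hLw a, smLM_apply, Real.norm_eq_abs, sq_abs]
    have h2 : ∑ a : A, ‖w a‖ ^ 2 = ∑ a : A, (e w) a ^ 2 := by
      refine Finset.sum_congr rfl fun a _ => ?_
      rw [Real.norm_eq_abs, sq_abs]; rfl
    rw [h1, h2]
    exact Real.sqrt_le_sqrt
      (key_ineq (softmax (e v)) (e w) (softmax_nonneg _) (softmax_sum_one _))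
  set x : E := e.symm (fun a => u a / sigma) with hx
  set y : E := e.symm (fun a => u' a / sigma) with hy
  have hmvt : ‖F x - F y‖ ≤ 1 * ‖x - y‖ :=
    convex_univ.norm_image_sub_le_of_norm_hasFDerivWithin_le
      (fun v _ => (hFderiv v).hasFDerivWithinAt) (fun v _ => hnorm v)
      (Set.mem_univ y) (Set.mem_univ x)
  rw [one_mul] at hmvt
  have hex : e x = fun a => u a / sigma := e.apply_symm_apply _
  have hey : e y = fun a => u' a / sigma := e.apply_symm_apply _
  have hFx : ∀ a : A, (F x - F y) a
      = softmax (fun b => u b / sigma) a - softmax (fun b => u' b / sigma) a := by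
    intro a
    have : (F x - F y) a = softmax (e x) a - softmax (e y) a := rfl
    rw [this, hex, hey]
  have hxy : ∀ a : A, (x - y) a = u a / sigma - u' a / sigma := fun a => rfl
  have hLHS : ‖F x - F y‖ = Real.sqrt (∑ a : A,
      (softmax (fun b => u b / sigma) a - softmax (fun b => u' b / sigma) a) ^ 2) := by
    rw [EuclideanSpace.norm_eq]
    congr 1
    refine Finset.sum_congr rfl fun a _ => ?_
    rw [Real.norm_eq_abs, sq_abs, hFx a]
  have hRHS : ‖x - y‖ = (1 / sigma) * Real.sqrt (∑ a : A, (u a - u' a) ^ 2) := by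
    rw [EuclideanSpace.norm_eq]
    have h3 : ∑ a : A, ‖(x - y) a‖ ^ 2 = (∑ a : A, (u a - u' a) ^ 2) / sigma ^ 2 := by
      rw [Finset.sum_div]
      refine Finset.sum_congr rfl fun a _ => ?_
      rw [Real.norm_eq_abs, sq_abs, hxy a, div_sub_div_same, div_pow]
    rw [h3, Real.sqrt_div (Finset.sum_nonneg fun a _ => sq_nonneg _),
      Real.sqrt_sq hsigma.le, div_eq_mul_one_div, mul_comm]
  rw [hLHS, hRHS] at hmvt
  exact hmvt
end

section
/- Existence of a fixed point of the smooth best response: For any finite normal-form game $(I, (A_i), (u_i))$ and temperature $\sigma > 0$, there exists a joint mixed strategy profile $\pi^* \in \prod_i \Delta(A_i)$ such that for every player $i$ and action $a_i$, $\pi_i^*(a_i) = \exp(U_i(a_i, \pi^*_{-i})/\sigma) / \sum_{a_i'} \exp(U_i(a_i', \pi^*_{-i})/\sigma)$. -/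
section SmoothBrouwerProof

open MeasureTheory Polynomial Metric Set
open scoped RealInnerProductSpace

noncomputable section
namespace SB

variable {E : Type*} [NormedAddCommGroup E] [InnerProductSpace ℝ E]

variable (f : E → E) (R : ℝ)

def dd (x : E) : E := x - f x
def aa (x : E) : ℝ := ⟪x, dd f x⟫
def disc (x : E) : ℝ := aa f x ^ 2 + ‖dd f x‖ ^ 2 * (R ^ 2 - ‖x‖ ^ 2)
def UU : Set E := {x | 0 < disc f R x}
def ss (x : E) : ℝ := (Real.sqrt (disc f R x) - aa f x) / ‖dd f x‖ ^ 2
def rr (x : E) : E := x + ss f R x • dd f x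

variable {f R}

lemma isOpen_UU (hfc : Continuous f) : IsOpen (UU f R) := by
  have hd : Continuous (dd f) := continuous_id.sub hfc
  have : Continuous (disc f R) := by
    apply Continuous.add
    · exact ((continuous_id.inner hd)).pow 2
    · exact ((hd.inner hd).congr (fun x => real_inner_self_eq_norm_sq _)).mul
        (continuous_const.sub ((continuous_id.inner continuous_id).congr
          (fun x => real_inner_self_eq_norm_sq _)))
  exact isOpen_lt continuous_const this

lemma ball_subset_UU (hfR : ∀ x, ‖f x‖ + 1 ≤ R) (hfp : ∀ x, f x ≠ x) :
    closedBall (0 : E) R ⊆ UU f R := by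
  intro x hx
  have hxR : ‖x‖ ≤ R := by simpa using mem_closedBall_zero_iff.1 hx
  have hR1 : (1:ℝ) ≤ R := le_trans (le_add_of_nonneg_left (norm_nonneg _)) (hfR 0)
  rcases lt_or_eq_of_le hxR with h | h
  · have hdne : dd f x ≠ 0 := sub_ne_zero.2 fun hh => hfp x hh.symm
    have h1 : 0 < ‖dd f x‖ ^ 2 := by
      exact pow_pos (norm_pos_iff.2 hdne) 2
    have h2 : 0 < R ^ 2 - ‖x‖ ^ 2 := by nlinarith [norm_nonneg x]
    have := sq_nonneg (aa f x)
    simp only [UU, disc, Set.mem_setOf_eq]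
    nlinarith
  · have haa : 0 < aa f x := by
      have h1 : ⟪x, f x⟫ ≤ ‖x‖ * ‖f x‖ := real_inner_le_norm x (f x)
      have h2 : aa f x = ‖x‖ ^ 2 - ⟪x, f x⟫ := by
        simp [aa, dd, inner_sub_right, real_inner_self_eq_norm_sq]
      rw [h2]
      have := hfR x
      nlinarith [norm_nonneg x, norm_nonneg (f x)]
    simp only [UU, disc, Set.mem_setOf_eq, ← h]
    nlinarith

lemma norm_rr_sq (hfp : ∀ x, f x ≠ x) {x : E} (hx : x ∈ UU f R) : ‖rr f R x‖ ^ 2 = R ^ 2 := by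
  have hdne : dd f x ≠ 0 := sub_ne_zero.2 fun hh => hfp x hh.symm
  have hD : (0:ℝ) < ‖dd f x‖ ^ 2 := by
    exact pow_pos (norm_pos_iff.2 hdne) 2
  have hdisc : 0 < disc f R x := hx
  have hsq : Real.sqrt (disc f R x) ^ 2 = disc f R x := Real.sq_sqrt hdisc.le
  have hexp : ‖rr f R x‖ ^ 2
      = ‖x‖ ^ 2 + 2 * ss f R x * aa f x + ss f R x ^ 2 * ‖dd f x‖ ^ 2 := by
    rw [← real_inner_self_eq_norm_sq]
    simp only [rr, inner_add_add_self, real_inner_smul_left, real_inner_smul_right,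
      real_inner_self_eq_norm_sq]
    rw [norm_smul, mul_pow, Real.norm_eq_abs, sq_abs]
    simp only [aa, real_inner_comm]
    ring
  have hdisc_def : disc f R x = aa f x ^ 2 + ‖dd f x‖ ^ 2 * (R ^ 2 - ‖x‖ ^ 2) := rfl
  have hss : ss f R x = (Real.sqrt (disc f R x) - aa f x) / ‖dd f x‖ ^ 2 := rfl
  rw [hexp, hss]
  field_simp
  nlinarith [hsq, sq_nonneg (Real.sqrt (disc f R x) - aa f x)]

lemma rr_eq_id (hfR : ∀ x, ‖f x‖ + 1 ≤ R) {x : E} (hxR : ‖x‖ = R) : rr f R x = x := by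
  have hR1 : (1:ℝ) ≤ R := le_trans (le_add_of_nonneg_left (norm_nonneg _)) (hfR 0)
  have haa : 0 < aa f x := by
    have h1 : ⟪x, f x⟫ ≤ ‖x‖ * ‖f x‖ := real_inner_le_norm x (f x)
    have h2 : aa f x = ‖x‖ ^ 2 - ⟪x, f x⟫ := by
      simp [aa, dd, inner_sub_right, real_inner_self_eq_norm_sq]
    rw [h2]
    have := hfR x
    nlinarith [norm_nonneg x, norm_nonneg (f x)]
  have hdisc : disc f R x = aa f x ^ 2 := by
    simp [disc, hxR]
  have : ss f R x = 0 := by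
    rw [ss, hdisc, Real.sqrt_sq haa.le, sub_self, zero_div]
  simp [rr, this]

variable {E : Type*} [NormedAddCommGroup E] [InnerProductSpace ℝ E]
variable {f : E → E} {R : ℝ} {n : WithTop ℕ∞}

lemma contDiff_dd (hf : ContDiff ℝ n f) : ContDiff ℝ n (dd f) := contDiff_id.sub hf

lemma contDiff_normsq {F : Type*} [NormedAddCommGroup F] [NormedSpace ℝ F] {g : F → E}
    (h : ContDiff ℝ n g) : ContDiff ℝ n (fun y => ‖g y‖ ^ 2) := by
  have := h.inner ℝ h
  simpa only [real_inner_self_eq_norm_sq] using this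

lemma contDiff_disc (hf : ContDiff ℝ n f) : ContDiff ℝ n (disc f R) := by
  have hdd := contDiff_dd hf
  exact ((contDiff_id.inner ℝ hdd).pow 2).add
    ((contDiff_normsq hdd).mul (contDiff_const.sub (contDiff_normsq contDiff_id)))

lemma contDiffAt_rr (hf : ContDiff ℝ n f) (hfp : ∀ x, f x ≠ x) {x : E}
    (hx : x ∈ UU f R) : ContDiffAt ℝ n (rr f R) x := by
  have hdd := contDiff_dd hf
  have hdne : dd f x ≠ 0 := sub_ne_zero.2 fun hh => hfp x hh.symm
  have hD : (0:ℝ) < ‖dd f x‖ ^ 2 := pow_pos (norm_pos_iff.2 hdne) 2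
  have hnormsq : ContDiff ℝ n (fun y => ‖dd f y‖ ^ 2) := contDiff_normsq hdd
  have hsqrt : ContDiffAt ℝ n (fun y => Real.sqrt (disc f R y)) x :=
    (Real.contDiffAt_sqrt (ne_of_gt hx)).comp x (contDiff_disc hf).contDiffAt
  have hss : ContDiffAt ℝ n (ss f R) x := by
    exact (hsqrt.sub (contDiff_id.inner ℝ hdd).contDiffAt).div hnormsq.contDiffAt (ne_of_gt hD)
  exact contDiffAt_id.add (hss.smul hdd.contDiffAt)

lemma inner_rr_fderiv (hf : ContDiff ℝ n f) (hn : 1 ≤ n) (hfc : Continuous f)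
    (hfp : ∀ x, f x ≠ x) {x : E} (hx : x ∈ UU f R) (v : E) :
    ⟪rr f R x, fderiv ℝ (rr f R) x v⟫ = 0 := by
  have hrx : ContDiffAt ℝ n (rr f R) x := contDiffAt_rr hf hfp hx
  have hdiff : DifferentiableAt ℝ (rr f R) x := hrx.differentiableAt (zero_lt_one.trans_le hn).ne'
  have hUopen : IsOpen (UU f R) := isOpen_UU hfc
  have hconst : (fun y => ⟪rr f R y, rr f R y⟫) =ᶠ[nhds x] (fun _ => R ^ 2) := by
    filter_upwards [hUopen.mem_nhds hx] with y hy
    rw [real_inner_self_eq_norm_sq, norm_rr_sq hfp hy]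
  have hφ : HasFDerivAt (fun y => ⟪rr f R y, rr f R y⟫)
      ((fderivInnerCLM ℝ (rr f R x, rr f R x)).comp
        ((fderiv ℝ (rr f R) x).prod (fderiv ℝ (rr f R) x))) x :=
    hdiff.hasFDerivAt.inner ℝ hdiff.hasFDerivAt
  have h0 : (fderivInnerCLM ℝ (rr f R x, rr f R x)).comp
      ((fderiv ℝ (rr f R) x).prod (fderiv ℝ (rr f R) x)) = 0 := by
    rw [← hφ.fderiv]
    rw [Filter.EventuallyEq.fderiv_eq hconst]
    exact fderiv_const_apply _
  have := ContinuousLinearMap.ext_iff.1 h0 v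
  simp only [ContinuousLinearMap.comp_apply, ContinuousLinearMap.prod_apply,
    fderivInnerCLM_apply, ContinuousLinearMap.zero_apply] at this
  have hcomm : ⟪fderiv ℝ (rr f R) x v, rr f R x⟫ = ⟪rr f R x, fderiv ℝ (rr f R) x v⟫ :=
    real_inner_comm _ _
  linarith [this, hcomm.symm ▸ this]

lemma det_fderiv_rr [FiniteDimensional ℝ E] (hf : ContDiff ℝ n f) (hn : 1 ≤ n)
    (hfc : Continuous f) (hfp : ∀ x, f x ≠ x) (hR : 0 < R) {x : E} (hx : x ∈ UU f R) :
    (fderiv ℝ (rr f R) x).det = 0 := by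
  by_contra hdet
  have hrne : rr f R x ≠ 0 := by
    intro h0
    have := norm_rr_sq (R := R) hfp hx
    rw [h0] at this
    simp at this
    nlinarith
  have hsurj : Function.Surjective (fderiv ℝ (rr f R) x) := by
    have : Function.Surjective ((fderiv ℝ (rr f R) x) : E →ₗ[ℝ] E) := by
      have hdet' : LinearMap.det ((fderiv ℝ (rr f R) x) : E →ₗ[ℝ] E) ≠ 0 := hdet
      exact (LinearMap.equivOfDetNeZero _ hdet').surjective
    exact this
  obtain ⟨v, hv⟩ := hsurj (rr f R x)
  have := inner_rr_fderiv hf hn hfc hfp hx v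
  rw [hv, real_inner_self_eq_norm_sq] at this
  exact hrne (norm_eq_zero.1 (by nlinarith [norm_nonneg (rr f R x)]))

lemma det_one_add_smul_poly {m : ℕ} (M : Matrix (Fin m) (Fin m) ℝ) :
    ∃ q : ℝ[X], q.degree < (m + 1 : ℕ) ∧ ∀ t : ℝ, q.eval t = (1 + t • M).det := by
  set Q : Matrix (Fin m) (Fin m) ℝ[X] :=
    1 + Matrix.of (fun i j => Polynomial.C (M i j) * Polynomial.X) with hQ
  refine ⟨Q.det, ?_, ?_⟩
  · rw [Matrix.det_apply']
    refine lt_of_le_of_lt (Polynomial.degree_sum_le _ _) ?_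
    rw [Finset.sup_lt_iff (by exact_mod_cast WithBot.bot_lt_coe _)]
    intro σ _
    refine lt_of_le_of_lt (Polynomial.degree_mul_le _ _) ?_
    have h1 : (Polynomial.degree ((Equiv.Perm.sign σ : ℤ) : ℝ[X])) ≤ 0 :=
      Polynomial.degree_intCast_le _
    have h2 : Polynomial.degree (∏ i, Q (σ i) i) ≤ (m : ℕ) := by
      refine le_trans (Polynomial.degree_prod_le _ _) ?_
      have hent : ∀ i : Fin m, Polynomial.degree (Q (σ i) i) ≤ 1 := by
        intro i
        have hQe : Q (σ i) i
            = (if σ i = i then 1 else 0) + Polynomial.C (M (σ i) i) * Polynomial.X := by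
          simp [hQ, Matrix.add_apply, Matrix.one_apply]
        rw [hQe]
        refine le_trans (Polynomial.degree_add_le _ _) (max_le ?_ ?_)
        · split <;> simp
        · refine le_trans (Polynomial.degree_mul_le _ _) ?_
          refine le_trans (add_le_add Polynomial.degree_C_le le_rfl) ?_
          simp [Polynomial.degree_X]
      refine le_trans (Finset.sum_le_sum (fun i _ => hent i)) ?_
      simp
    calc Polynomial.degree ((Equiv.Perm.sign σ : ℤ) : ℝ[X]) + Polynomial.degree (∏ i, Q (σ i) i)
        ≤ 0 + (m : ℕ) := add_le_add h1 h2
      _ = (m : ℕ) := zero_add _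
      _ < ((m + 1 : ℕ) : WithBot ℕ) := by exact_mod_cast Nat.lt_succ_self m
  · intro t
    have hmap := RingHom.map_det (Polynomial.evalRingHom t) Q
    simp only [Polynomial.coe_evalRingHom] at hmap
    rw [hmap]
    congr 1
    ext i j
    simp only [RingHom.mapMatrix_apply, Matrix.map_apply, hQ, Matrix.add_apply, Matrix.of_apply,
      Matrix.smul_apply, Matrix.one_apply, eval_add, eval_mul, eval_C, eval_X, smul_eq_mul]
    split <;> simp only [coe_evalRingHom, eval_add, eval_one, eval_mul, eval_C, eval_X, eval_zero] <;> ring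

abbrev Ee (m : ℕ) := EuclideanSpace ℝ (Fin m)

set_option maxHeartbeats 1000000 in
theorem smooth_brouwer_euclidean {m : ℕ} (f : Ee m → Ee m)
    (hf : ContDiff ℝ 2 f) (C : ℝ) (hC : ∀ x, ‖f x‖ ≤ C) : ∃ x, f x = x := by
  by_contra hcon
  push_neg at hcon
  have hfp : ∀ x, f x ≠ x := hcon
  have hfc : Continuous f := hf.continuous
  set R : ℝ := C + 1 with hRdef
  have hfR : ∀ x, ‖f x‖ + 1 ≤ R := fun x => by
    have := hC x; simp only [hRdef]; linarith
  have hR1 : (1:ℝ) ≤ R := le_trans (le_add_of_nonneg_left (norm_nonneg _)) (hfR 0)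
  have hR : (0:ℝ) < R := by linarith
  set B : Set (Ee m) := closedBall 0 R with hBdef
  have hBU : B ⊆ UU f R := ball_subset_UU hfR hfp
  have hBc : IsCompact B := isCompact_closedBall _ _
  have hBconv : Convex ℝ B := convex_closedBall _ _
  have hBmeas : MeasurableSet B := measurableSet_closedBall
  have hUo : IsOpen (UU f R) := isOpen_UU hfc
  -- the displacement h and its derivative Af
  set h : Ee m → Ee m := fun x => rr f R x - x with hhdef
  have hhC : ∀ x ∈ UU f R, ContDiffAt ℝ 2 h x := fun x hx =>
    (contDiffAt_rr hf hfp hx).sub contDiffAt_id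
  have hhdiff : ∀ x ∈ UU f R, DifferentiableAt ℝ h x := fun x hx =>
    (hhC x hx).differentiableAt two_ne_zero
  set Af : Ee m → (Ee m →L[ℝ] Ee m) := fun x => fderiv ℝ h x with hAdef
  have hAc : ContinuousOn Af (UU f R) := by
    have hhCD : ContDiffOn ℝ 2 h (UU f R) := fun x hx => (hhC x hx).contDiffWithinAt
    have := hhCD.continuousOn_fderivWithin hUo.uniqueDiffOn one_le_two
    exact this.congr fun x hx => (fderivWithin_of_isOpen hUo hx).symm
  -- Lipschitz bound for h on B
  obtain ⟨L₀, hL₀⟩ := hBc.exists_bound_of_continuousOn (hAc.mono hBU)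
  set L : ℝ := max L₀ 0 with hLdef
  have hL : ∀ x ∈ B, ‖Af x‖ ≤ L := fun x hx => le_trans (hL₀ x hx) (le_max_left _ _)
  have hLnn : (0:ℝ) ≤ L := le_max_right _ _
  -- the homotopy g
  set g : ℝ → Ee m → Ee m := fun t x => x + t • h x with hgdef
  have hgderiv : ∀ (t : ℝ), ∀ x ∈ UU f R, HasFDerivAt (g t) (1 + t • Af x) x := by
    intro t x hx
    have h1 : HasFDerivAt (fun y => t • h y) (t • Af x) x :=
      ((hhdiff x hx).hasFDerivAt).const_smul t
    have h2 : HasFDerivAt (fun y : Ee m => y) (1 : Ee m →L[ℝ] Ee m) x := hasFDerivAt_id x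
    exact h2.add h1
  have hgcont : ∀ t : ℝ, ContinuousOn (g t) B := by
    intro t
    exact fun x hx => ((hhdiff x (hBU hx)).continuousAt.const_smul t).continuousWithinAt.add
      continuousWithinAt_id |>.congr (fun y _ => by simp [hgdef, add_comm]) (by simp [hgdef, add_comm])
  -- injectivity of g t for small t
  have hinj : ∀ t : ℝ, 0 ≤ t → t * L < 1 → Set.InjOn (g t) B := by
    intro t ht htL x hx y hy hxy
    have hderB : ∀ z ∈ B, HasFDerivWithinAt h (Af z) B z := fun z hz =>
      ((hhdiff z (hBU hz)).hasFDerivAt).hasFDerivWithinAt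
    have hlip : ‖h y - h x‖ ≤ L * ‖y - x‖ :=
      hBconv.norm_image_sub_le_of_norm_hasFDerivWithin_le hderB hL hx hy
    have hxy' : x - y = t • (h y - h x) := by
      have h' : x + t • h x = y + t • h y := hxy
      rw [smul_sub]
      calc x - y = (x + t • h x) - t • h x - y := by abel
        _ = (y + t • h y) - t • h x - y := by rw [h']
        _ = t • h y - t • h x := by abel
    by_contra hne
    have hnorm : ‖x - y‖ = t * ‖h y - h x‖ := by
      rw [hxy', norm_smul, Real.norm_eq_abs, abs_of_nonneg ht]
    have h0 : 0 < ‖x - y‖ := by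
      rw [norm_pos_iff]; exact sub_ne_zero.2 hne
    have : ‖x - y‖ ≤ t * L * ‖y - x‖ := by
      rw [hnorm]
      calc t * ‖h y - h x‖ ≤ t * (L * ‖y - x‖) := by
            exact mul_le_mul_of_nonneg_left hlip ht
        _ = t * L * ‖y - x‖ := by ring
    rw [norm_sub_rev y x] at this
    nlinarith
  -- determinant positivity via the tube lemma
  set D : ℝ × Ee m → ℝ := fun q => (1 + q.1 • Af q.2).det with hDdef
  have hDc : ContinuousOn D ((univ : Set ℝ) ×ˢ UU f R) := by
    apply ContinuousLinearMap.continuous_det.comp_continuousOn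
    refine continuousOn_const.add (ContinuousOn.fun_smul ?_ ?_)
    · exact continuous_fst.continuousOn
    · exact hAc.comp continuous_snd.continuousOn (fun q hq => hq.2)
  have hO : IsOpen (((univ : Set ℝ) ×ˢ UU f R) ∩ D ⁻¹' (Ioi 0)) :=
    hDc.isOpen_inter_preimage (isOpen_univ.prod hUo) isOpen_Ioi
  have hsub0 : ({(0:ℝ)} : Set ℝ) ×ˢ B ⊆ ((univ : Set ℝ) ×ˢ UU f R) ∩ D ⁻¹' (Ioi 0) := by
    rintro ⟨t, x⟩ ⟨ht, hx⟩
    simp only [mem_singleton_iff] at ht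
    subst ht
    refine ⟨⟨trivial, hBU hx⟩, ?_⟩
    show (0:ℝ) < ((1 : Ee m →L[ℝ] Ee m) + (0:ℝ) • Af x).det
    have hz : ((1 : Ee m →L[ℝ] Ee m) + (0:ℝ) • Af x) = 1 := by
      ext z; simp
    rw [hz]
    have h1 : (1 : Ee m →L[ℝ] Ee m).det = 1 := by
      simp [ContinuousLinearMap.det, ContinuousLinearMap.one_def, ContinuousLinearMap.coe_id,
        LinearMap.det_id]
    rw [h1]; norm_num
  obtain ⟨u, w, huo, hwo, h0u, hBw, huw⟩ :=
    generalized_tube_lemma isCompact_singleton hBc hO hsub0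
  obtain ⟨ε₀, hε₀, hball⟩ := Metric.isOpen_iff.1 huo 0 (h0u rfl)
  set ε : ℝ := min (ε₀/2) (min (1/(2*(L+1))) (1/2)) with hεdef
  have hεpos : 0 < ε := by
    refine lt_min (by linarith) (lt_min (by positivity) (by norm_num))
  have hεhalf : ε ≤ 1/2 := le_trans (min_le_right _ _) (min_le_right _ _)
  have hεL : ∀ t : ℝ, 0 ≤ t → t ≤ ε → t * L < 1 := by
    intro t ht htε
    have h1 : t ≤ 1/(2*(L+1)) := le_trans htε (le_trans (min_le_right _ _) (min_le_left _ _))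
    have h2 : (0:ℝ) < 2*(L+1) := by linarith
    have hA : t * (2*(L+1)) ≤ 1 := by
      rw [← le_div_iff₀ h2]; exact h1
    rcases eq_or_lt_of_le ht with h0 | h0
    · rw [← h0]; norm_num
    · nlinarith [mul_pos h0 (show (0:ℝ) < L + 2 by linarith)]
  have hdetpos : ∀ t : ℝ, 0 ≤ t → t ≤ ε → ∀ x ∈ B, 0 < (1 + t • Af x).det := by
    intro t ht htε x hx
    have htu : t ∈ u := by
      apply hball
      simp only [mem_ball, Real.dist_eq, sub_zero, abs_of_nonneg ht]
      calc t ≤ ε := htε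
        _ ≤ ε₀/2 := min_le_left _ _
        _ < ε₀ := by linarith
    have hmem : (t, x) ∈ u ×ˢ w := ⟨htu, hBw hx⟩
    exact (huw hmem).2
  -- ‖rr x‖ = R on U
  have hrrnorm : ∀ x ∈ UU f R, ‖rr f R x‖ = R := by
    intro x hx
    have := norm_rr_sq hfp hx
    nlinarith [norm_nonneg (rr f R x)]
  -- g t maps B into B
  have hmapsto : ∀ t : ℝ, 0 ≤ t → t ≤ 1 → ∀ x ∈ B, g t x ∈ B := by
    intro t ht ht1 x hx
    have hrB : rr f R x ∈ B := by
      rw [hBdef, mem_closedBall_zero_iff, hrrnorm x (hBU hx)]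
    have hgx : g t x = (1 - t) • x + t • rr f R x := by
      simp only [hgdef, hhdef, smul_sub, sub_smul, one_smul]
      abel
    rw [hgx]
    exact hBconv hx hrB (by linarith) ht (by ring)
  -- g t is onto B for small t
  have hsurj : ∀ t : ℝ, 0 ≤ t → t ≤ ε → g t '' B = B := by
    intro t ht htε
    have ht1 : t ≤ 1/2 := le_trans htε hεhalf
    have hsphere : ∀ x : Ee m, ‖x‖ = R → g t x = x := by
      intro x hxR
      have hrx : rr f R x = x := rr_eq_id hfR hxR
      simp [hgdef, hhdef, hrx]
    set S : Set (Ee m) := g t '' B with hSdef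
    have hSc : IsCompact S := hBc.image_of_continuousOn (hgcont t)
    have hSnhds : ∀ y ∈ S, y ∈ ball (0:Ee m) R → S ∈ nhds y := by
      intro y hy hyball
      obtain ⟨x, hx, rfl⟩ := hy
      have hxU : x ∈ UU f R := hBU hx
      have hdet : (1 + t • Af x).det ≠ 0 := ne_of_gt (hdetpos t ht htε x hx)
      have hstrict : HasStrictFDerivAt (g t) (1 + t • Af x) x := by
        have hcd : ContDiffAt ℝ 2 (g t) x :=
          contDiffAt_id.add (contDiffAt_const.fun_smul (hhC x hxU))
        have hst := hcd.hasStrictFDerivAt two_ne_zero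
        rwa [(hgderiv t x hxU).fderiv] at hst
      set e := LinearEquiv.toContinuousLinearEquiv
        (LinearMap.equivOfDetNeZero ((1 + t • Af x : Ee m →L[ℝ] Ee m) : Ee m →ₗ[ℝ] Ee m) hdet)
        with hedef
      have hecoe : (e : Ee m →L[ℝ] Ee m) = 1 + t • Af x := by
        ext z; rfl
      have hmap : Filter.map (g t) (nhds x) = nhds (g t x) :=
        HasStrictFDerivAt.map_nhds_eq_of_equiv (f' := e) (by rw [hecoe]; exact hstrict)
      have hxball : ‖x‖ < R := by
        rcases lt_or_eq_of_le (mem_closedBall_zero_iff.1 hx) with hlt | heq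
        · exact hlt
        · exfalso
          rw [hsphere x heq] at hyball
          have := mem_ball_zero_iff.1 hyball
          linarith [heq ▸ this]
      rw [← hmap]
      refine Filter.image_mem_map ?_
      exact mem_nhds_iff.2 ⟨ball (0:Ee m) R,
        fun z hz => mem_closedBall_zero_iff.2 (le_of_lt (mem_ball_zero_iff.1 hz)),
        isOpen_ball, mem_ball_zero_iff.2 hxball⟩
    -- clopen/connectedness argument: ball ⊆ S
    have h0B : (0:Ee m) ∈ B := mem_closedBall_self hR.le
    have hgt0 : g t 0 ∈ ball (0:Ee m) R := by
      have h0U : (0:Ee m) ∈ UU f R := hBU h0B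
      have : g t 0 = t • rr f R 0 := by
        simp [hgdef, hhdef]
      rw [mem_ball_zero_iff, this, norm_smul, Real.norm_eq_abs, abs_of_nonneg ht,
        hrrnorm 0 h0U]
      nlinarith
    have hballS : ball (0:Ee m) R ⊆ S := by
      by_contra hns
      obtain ⟨y, hyball, hyS⟩ := not_subset.1 hns
      set T1 : Set (Ee m) := ball (0:Ee m) R ∩ S with hT1def
      set T2 : Set (Ee m) := ball (0:Ee m) R ∩ Sᶜ with hT2def
      have hT1o : IsOpen T1 := by
        rw [isOpen_iff_mem_nhds]
        intro z hz
        exact Filter.inter_mem (isOpen_ball.mem_nhds hz.1) (hSnhds z hz.2 hz.1)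
      have hT2o : IsOpen T2 := isOpen_ball.inter hSc.isClosed.isOpen_compl
      have hcover : ball (0:Ee m) R ⊆ T1 ∪ T2 := by
        intro z hz
        by_cases hzS : z ∈ S
        · exact Or.inl ⟨hz, hzS⟩
        · exact Or.inr ⟨hz, hzS⟩
      have hT1ne : (ball (0:Ee m) R ∩ T1).Nonempty :=
        ⟨g t 0, hgt0, hgt0, ⟨0, h0B, rfl⟩⟩
      have hT2ne : (ball (0:Ee m) R ∩ T2).Nonempty := ⟨y, hyball, hyball, hyS⟩
      obtain ⟨z, hzball, hz1, hz2⟩ :=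
        (convex_ball (0:Ee m) R).isPreconnected T1 T2 hT1o hT2o hcover hT1ne hT2ne
      exact hz2.2 hz1.2
    apply Subset.antisymm
    · rintro y ⟨x, hx, rfl⟩
      exact hmapsto t ht (by linarith) x hx
    · intro y hy
      rcases lt_or_eq_of_le (mem_closedBall_zero_iff.1 hy) with hlt | heq
      · exact hballS (mem_ball_zero_iff.2 hlt)
      · exact ⟨y, hy, hsphere y heq⟩
  -- the integral of the Jacobian determinant
  set p : ℝ → ℝ := fun t => ∫ x in B, (1 + t • Af x).det with hpdef
  have hintc : ∀ t : ℝ, ContinuousOn (fun x => (1 + t • Af x).det) B := by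
    intro t
    apply ContinuousLinearMap.continuous_det.comp_continuousOn
    exact continuousOn_const.add ((hAc.mono hBU).const_smul t)
  have hintg : ∀ t : ℝ, IntegrableOn (fun x => (1 + t • Af x).det) B volume := fun t =>
    (hintc t).integrableOn_compact hBc
  have hpval : ∀ t : ℝ, 0 ≤ t → t ≤ ε → p t = (volume B).toReal := by
    intro t ht htε
    have hder : ∀ x ∈ B, HasFDerivWithinAt (g t) (1 + t • Af x) B x := fun x hx =>
      (hgderiv t x (hBU hx)).hasFDerivWithinAt
    have hinj' : InjOn (g t) B := hinj t ht (hεL t ht htε)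
    have hcv := lintegral_abs_det_fderiv_eq_addHaar_image volume hBmeas hder hinj'
    rw [hsurj t ht htε] at hcv
    have habs : ∀ᵐ x ∂volume, x ∈ B →
        ENNReal.ofReal |(1 + t • Af x).det| = ENNReal.ofReal ((1 + t • Af x).det) :=
      ae_of_all _ fun x hx => by rw [abs_of_pos (hdetpos t ht htε x hx)]
    rw [setLIntegral_congr_fun_ae hBmeas habs] at hcv
    have hnn : 0 ≤ᵐ[volume.restrict B] fun x => (1 + t • Af x).det :=
      (ae_restrict_iff' hBmeas).2 (ae_of_all _ fun x hx => (hdetpos t ht htε x hx).le)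
    have hint := MeasureTheory.integral_eq_lintegral_of_nonneg_ae hnn
      (hintg t).aestronglyMeasurable
    rw [hpdef]
    simp only []
    rw [hint, hcv]
  -- Lagrange nodes
  set v : ℕ → ℝ := fun j => ε * j / (m+1) with hvdef
  have hm1 : (0:ℝ) < (m:ℝ) + 1 := by positivity
  have hvinj : Set.InjOn v (Finset.range (m+1)) := by
    intro a _ b _ hab
    simp only [hvdef] at hab
    have h1 : ε * (a:ℝ) = ε * (b:ℝ) := by
      exact (div_left_inj' hm1.ne').1 hab
    exact_mod_cast mul_left_cancel₀ (ne_of_gt hεpos) h1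
  have hv0 : ∀ j ∈ Finset.range (m+1), 0 ≤ v j ∧ v j ≤ ε := by
    intro j hj
    have hjm : (j:ℝ) ≤ m := by
      exact_mod_cast Nat.lt_succ_iff.1 (Finset.mem_range.1 hj)
    constructor
    · simp only [hvdef]; positivity
    · simp only [hvdef]
      rw [div_le_iff₀ hm1]
      nlinarith
  -- pointwise polynomial interpolation identity
  have hpt : ∀ t : ℝ, ∀ x : Ee m, (1 + t • Af x).det
      = ∑ j ∈ Finset.range (m+1),
          eval t (Lagrange.basis (Finset.range (m+1)) v j) * (1 + v j • Af x).det := by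
    intro t x
    set bb := (EuclideanSpace.basisFun (Fin m) ℝ).toBasis with hbbdef
    set M := LinearMap.toMatrix bb bb ((Af x : Ee m →L[ℝ] Ee m) : Ee m →ₗ[ℝ] Ee m) with hMdef
    obtain ⟨q, hqdeg, hqev⟩ := det_one_add_smul_poly M
    have hrel : ∀ c : ℝ, (1 + c • Af x).det = (1 + c • M).det := by
      intro c
      show LinearMap.det ((1 + c • Af x : Ee m →L[ℝ] Ee m) : Ee m →ₗ[ℝ] Ee m) = _
      rw [← LinearMap.det_toMatrix bb]
      congr 1
      have hcoe : ((1 + c • Af x : Ee m →L[ℝ] Ee m) : Ee m →ₗ[ℝ] Ee m)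
          = 1 + c • ((Af x : Ee m →L[ℝ] Ee m) : Ee m →ₗ[ℝ] Ee m) := rfl
      rw [hcoe, _root_.map_add, _root_.map_smul, hMdef]
      congr 1
      rw [Module.End.one_eq_id, LinearMap.toMatrix_id]
    have hcard : q.degree < ((Finset.range (m+1)).card : WithBot ℕ) := by
      simpa using hqdeg
    have hinterp := Lagrange.eq_interpolate hvinj hcard
    rw [hrel t, ← hqev t]
    conv_lhs => rw [hinterp]
    rw [Lagrange.interpolate_apply, Polynomial.eval_finset_sum]
    refine Finset.sum_congr rfl ?_
    intro j hj
    rw [eval_mul, eval_C, hqev, ← hrel]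
    ring
  -- sum of Lagrange basis polynomials at 1
  have hone : ∑ j ∈ Finset.range (m+1),
      eval (1:ℝ) (Lagrange.basis (Finset.range (m+1)) v j) = 1 := by
    have hdeg1 : (1 : ℝ[X]).degree < ((Finset.range (m+1)).card : WithBot ℕ) := by
      rw [Polynomial.degree_one]
      simp only [Finset.card_range]
      exact_mod_cast Nat.succ_pos m
    have hinterp := Lagrange.eq_interpolate (f := (1:ℝ[X])) hvinj hdeg1
    have hev := congrArg (Polynomial.eval (1:ℝ)) hinterp
    simp only [Lagrange.interpolate_apply, Polynomial.eval_finset_sum, eval_mul, eval_C,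
      eval_one, one_mul] at hev
    exact hev.symm
  -- p 1 two ways
  have hp1 : p 1 = (volume B).toReal := by
    have hk : p 1 = ∑ j ∈ Finset.range (m+1),
        eval (1:ℝ) (Lagrange.basis (Finset.range (m+1)) v j) * p (v j) := by
      rw [hpdef]
      simp only []
      have hfe : (fun x => (1 + (1:ℝ) • Af x).det)
          = fun x => ∑ j ∈ Finset.range (m+1),
              eval (1:ℝ) (Lagrange.basis (Finset.range (m+1)) v j) * (1 + v j • Af x).det :=
        funext (hpt 1)
      rw [hfe, MeasureTheory.integral_finset_sum]
      · exact Finset.sum_congr rfl fun j hj => by rw [MeasureTheory.integral_const_mul]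
      · exact fun j hj => ((hintg (v j)).const_mul _)
    rw [hk]
    calc ∑ j ∈ Finset.range (m+1),
          eval (1:ℝ) (Lagrange.basis (Finset.range (m+1)) v j) * p (v j)
        = ∑ j ∈ Finset.range (m+1),
          eval (1:ℝ) (Lagrange.basis (Finset.range (m+1)) v j) * (volume B).toReal :=
          Finset.sum_congr rfl fun j hj => by rw [hpval (v j) (hv0 j hj).1 (hv0 j hj).2]
      _ = (∑ j ∈ Finset.range (m+1),
          eval (1:ℝ) (Lagrange.basis (Finset.range (m+1)) v j)) * (volume B).toReal := by
          rw [Finset.sum_mul]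
      _ = (volume B).toReal := by rw [hone, one_mul]
  have hp10 : p 1 = 0 := by
    have hz : EqOn (fun x => (1 + (1:ℝ) • Af x).det) (fun _ => (0:ℝ)) B := by
      intro x hx
      have hxU := hBU hx
      have hdr : DifferentiableAt ℝ (rr f R) x :=
        (contDiffAt_rr hf hfp hxU).differentiableAt two_ne_zero
      have hfh : Af x = fderiv ℝ (rr f R) x - 1 := by
        rw [hAdef]
        simp only [hhdef]
        rw [fderiv_fun_sub hdr differentiableAt_fun_id]
        congr 1
        exact fderiv_id'
      have hfd : (1 + (1:ℝ) • Af x) = fderiv ℝ (rr f R) x := by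
        rw [one_smul, hfh]
        abel
      show (1 + (1:ℝ) • Af x).det = 0
      rw [hfd]
      exact det_fderiv_rr hf one_le_two hfc hfp hR hxU
    rw [hpdef]
    simp only []
    rw [setIntegral_congr_fun hBmeas hz]
    simp
  have hvolpos : 0 < (volume B).toReal := by
    refine ENNReal.toReal_pos ?_ ?_
    · exact (measure_closedBall_pos volume 0 hR).ne'
    · exact measure_closedBall_lt_top.ne
  rw [hp10] at hp1
  linarith

theorem smooth_brouwer {E : Type*} [NormedAddCommGroup E] [NormedSpace ℝ E]
    [FiniteDimensional ℝ E] (f : E → E) (hf : ContDiff ℝ 2 f) (C : ℝ)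
    (hC : ∀ x, ‖f x‖ ≤ C) : ∃ x, f x = x := by
  set ψ : E ≃L[ℝ] EuclideanSpace ℝ (Fin (Module.finrank ℝ E)) := toEuclidean with hψ
  set F : Ee (Module.finrank ℝ E) → Ee (Module.finrank ℝ E) :=
    fun y => ψ (f (ψ.symm y)) with hF
  have hFc : ContDiff ℝ 2 F :=
    (ψ.contDiff).comp (hf.comp ψ.symm.contDiff)
  have hFb : ∀ y, ‖F y‖ ≤ ‖(ψ : E →L[ℝ] EuclideanSpace ℝ (Fin (Module.finrank ℝ E)))‖ * C := by
    intro y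
    calc ‖F y‖ ≤ ‖(ψ : E →L[ℝ] EuclideanSpace ℝ (Fin (Module.finrank ℝ E)))‖ * ‖f (ψ.symm y)‖ :=
          (ψ : E →L[ℝ] EuclideanSpace ℝ (Fin (Module.finrank ℝ E))).le_opNorm _
      _ ≤ _ := mul_le_mul_of_nonneg_left (hC _) (norm_nonneg _)
  obtain ⟨y, hy⟩ := smooth_brouwer_euclidean F hFc _ hFb
  refine ⟨ψ.symm y, ?_⟩
  have h2 := congrArg ψ.symm hy
  simp only [hF, ContinuousLinearEquiv.symm_apply_apply] at h2
  exact h2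

end SB
end
end SmoothBrouwerProof

/-- Expected utility of player `i` for playing action `ai` while opponents mix
independently according to `pi`. -/
noncomputable def actionUtility {I : Type*} [Fintype I] [DecidableEq I]
    {A : I → Type*} [∀ i, Fintype (A i)]
    (u : ∀ i : I, (∀ j, A j) → ℝ)
    (pi : ∀ i, A i → ℝ) (i : I) (ai : A i) : ℝ :=
  ∑ aneg : (∀ j : {j : I // j ≠ i}, A j.1),
    (∏ j : {j : I // j ≠ i}, pi j.1 (aneg j)) *
      u i (fun j => if h : j = i then h ▸ ai else aneg ⟨j, h⟩)

set_option maxHeartbeats 1000000 in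
/-- existence of a fixed point of the smooth best response (logit
quantal response equilibrium) in any finite normal-form game, for any
temperature `σ > 0`. -/
theorem exists_smooth_best_response_fixed_point
    {I : Type*} [Fintype I] [DecidableEq I] [Nonempty I]
    {A : I → Type*} [∀ i, Fintype (A i)] [∀ i, Nonempty (A i)]
    (u : ∀ i : I, (∀ j, A j) → ℝ) (sigma : ℝ) (hsigma : 0 < sigma) :
    ∃ pi : ∀ i, A i → ℝ,
      (∀ i, (∀ ai, 0 ≤ pi i ai) ∧ ∑ ai, pi i ai = 1) ∧
      (∀ i, ∀ ai : A i,
        pi i ai = Real.exp (actionUtility u pi i ai / sigma) /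
          ∑ ai' : A i, Real.exp (actionUtility u pi i ai' / sigma)) := by
  classical
  set Φ : (∀ i, A i → ℝ) → (∀ i, A i → ℝ) := fun pi i ai =>
    Real.exp (actionUtility u pi i ai / sigma) /
      ∑ ai' : A i, Real.exp (actionUtility u pi i ai' / sigma) with hΦ
  have hU : ∀ (i : I) (ai : A i),
      ContDiff ℝ 2 (fun pi : ∀ i, A i → ℝ => actionUtility u pi i ai) := by
    intro i ai
    unfold actionUtility
    apply ContDiff.sum
    intro aneg _
    refine ContDiff.mul ?_ contDiff_const
    apply contDiff_prod
    intro j _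
    exact ((ContinuousLinearMap.proj (R := ℝ) (φ := fun _ : A j.1 => ℝ) (aneg j)).comp
      (ContinuousLinearMap.proj (R := ℝ) (φ := fun k : I => A k → ℝ) j.1)).contDiff
  have hden : ∀ (i : I) (pi : ∀ i, A i → ℝ),
      0 < ∑ ai' : A i, Real.exp (actionUtility u pi i ai' / sigma) := fun i pi =>
    Finset.sum_pos (fun _ _ => Real.exp_pos _) Finset.univ_nonempty
  have hΦc : ContDiff ℝ 2 Φ := by
    apply contDiff_pi.2
    intro i
    apply contDiff_pi.2
    intro ai
    refine ContDiff.div ?_ ?_ ?_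
    · exact Real.contDiff_exp.comp ((hU i ai).div_const _)
    · exact ContDiff.sum fun ai' _ => Real.contDiff_exp.comp ((hU i ai').div_const _)
    · intro pi
      exact ne_of_gt (hden i pi)
  have hΦb : ∀ pi, ‖Φ pi‖ ≤ 1 := by
    intro pi
    rw [pi_norm_le_iff_of_nonneg zero_le_one]
    intro i
    rw [pi_norm_le_iff_of_nonneg zero_le_one]
    intro ai
    simp only [hΦ]
    rw [Real.norm_eq_abs, abs_of_nonneg (by positivity)]
    rw [div_le_one (hden i pi)]
    exact Finset.single_le_sum (f := fun ai' => Real.exp (actionUtility u pi i ai' / sigma))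
      (fun a _ => (Real.exp_pos _).le) (Finset.mem_univ ai)
  obtain ⟨pi, hpi⟩ := SB.smooth_brouwer Φ hΦc 1 hΦb
  have heq : ∀ (i : I) (ai : A i), pi i ai = Real.exp (actionUtility u pi i ai / sigma) /
      ∑ ai' : A i, Real.exp (actionUtility u pi i ai' / sigma) := by
    intro i ai
    conv_lhs => rw [← hpi]
  refine ⟨pi, fun i => ⟨fun ai => ?_, ?_⟩, heq⟩
  · rw [heq i ai]
    positivity
  · calc ∑ ai, pi i ai
        = ∑ ai, Real.exp (actionUtility u pi i ai / sigma) /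
            ∑ ai' : A i, Real.exp (actionUtility u pi i ai' / sigma) :=
          Finset.sum_congr rfl fun ai _ => heq i ai
      _ = (∑ ai, Real.exp (actionUtility u pi i ai / sigma)) /
            ∑ ai' : A i, Real.exp (actionUtility u pi i ai' / sigma) := by
          rw [Finset.sum_div]
      _ = 1 := div_self (ne_of_gt (hden i pi))
end
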